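/- arXiv:math/0606440 — 4 statements merged into one kernel-verified Lean document; each statement's English description precedes it below -/
import Mathlib

section
/- Let p_n be a monic real polynomial of degree n with simple real zeros and let p_{n−1} be a monic real polynomial of degree n−1 with simple real zeros, such that the zeros of p_{n−1} and p_n interlace and all zeros of both polynomials lie in [m,M]. Then for every z ∈ ℂ with |z| > max(|m|,|M|), one has |p_{n−1}(z)/p_n(z)| ≥ 1/(2|z|). -/
open Filter Topology Polynomial

/-- Argument in `[0, 2π)`. -/
noncomputable def argNN (z : ℂ) : ℝ :=
  if Complex.arg z < 0 then Complex.arg z + 2 * Real.pi else Complex.arg z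

/-- Square root with branch cut along the positive real axis:
`ρ e^{iθ} ↦ ρ^{1/2} e^{iθ/2}` with `θ ∈ [0, 2π)`. -/
noncomputable def csqrt (z : ℂ) : ℂ :=
  ((‖z‖ ^ ((1 : ℝ) / 2) : ℝ) : ℂ) * Complex.exp (Complex.I * (argNN z : ℂ) / 2)

/-- Principal cube root: `ρ e^{iθ} ↦ ρ^{1/3} e^{iθ/3}` with `θ ∈ (−π, π]`. -/
noncomputable def ccbrt (z : ℂ) : ℂ :=
  ((‖z‖ ^ ((1 : ℝ) / 3) : ℝ) : ℂ) * Complex.exp (Complex.I * (Complex.arg z : ℂ) / 3)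

/-- `ω₃ = e^{2πi/3}`. -/
noncomputable def ω₃ : ℂ := Complex.exp (2 * (Real.pi : ℂ) * Complex.I / 3)

/-- The function `φ` from the paper. -/
noncomputable def phi (z : ℂ) : ℂ :=
  (27 / 4) * ((3 * ω₃ / 2) * ccbrt z *
    (ω₃ * ccbrt (-1 + csqrt (1 - z)) + ccbrt (-1 - csqrt (1 - z))) - 1)

/-- The density `w` of the measure `υ_{[0,1]}`. -/
noncomputable def w (x : ℝ) : ℝ :=
  (Real.sqrt 3 / (4 * Real.pi)) *
    (((1 + Real.sqrt (1 - x)) ^ ((1 : ℝ) / 3) + (1 - Real.sqrt (1 - x)) ^ ((1 : ℝ) / 3)) /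
      (x ^ ((2 : ℝ) / 3) * Real.sqrt (1 - x)))

section Aux
open Polynomial Finset

lemma re_half_le (z : ℂ) (t : ℝ) (h : |t| < ‖z‖) : 1/2 ≤ (z / (z - t)).re := by
  have hzt : z - (t:ℂ) ≠ 0 := by
    intro he
    have : z = (t:ℂ) := by linear_combination he
    rw [this, Complex.norm_real, Real.norm_eq_abs] at h; linarith
  have hsq : t^2 ≤ z.re^2 + z.im^2 := by
    have h1 : |t| * |t| ≤ ‖z‖ * ‖z‖ :=
      mul_self_le_mul_self (abs_nonneg t) h.le
    rw [abs_mul_abs_self, ← pow_two ‖z‖, ← Complex.normSq_eq_norm_sq, Complex.normSq_apply] at h1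
    nlinarith
  have hns : 0 < Complex.normSq (z - t) := Complex.normSq_pos.2 hzt
  rw [Complex.div_re, ← add_div, le_div_iff₀ hns]
  simp only [Complex.sub_re, Complex.sub_im, Complex.ofReal_re, Complex.ofReal_im,
    Complex.normSq_apply, sub_zero]
  nlinarith

lemma monic_eq_prod_of_roots {n : ℕ} {p : Polynomial ℝ} (hp : p.Monic) (hdeg : p.natDegree = n)
    (y : ℕ → ℝ) (hinj : Set.InjOn y (Finset.range n))
    (hroot : ∀ j < n, p.eval (y j) = 0) :
    p = ∏ j ∈ Finset.range n, (X - C (y j)) := by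
  set P : Polynomial ℝ := ∏ j ∈ Finset.range n, (X - C (y j)) with hP
  have hPm : P.Monic := monic_prod_of_monic _ _ fun i _ => monic_X_sub_C _
  have hPdeg : P.natDegree = n := by
    rw [hP, natDegree_prod_of_monic _ _ fun i _ => monic_X_sub_C _]
    simp
  rcases eq_or_ne p P with h | h
  · exact h
  have hdlt : (p - P).degree < ((Finset.range n).card : WithBot ℕ) := by
    have h1 : (p - P).degree < p.degree :=
      degree_sub_lt (by rw [degree_eq_natDegree hp.ne_zero, degree_eq_natDegree hPm.ne_zero,
        hdeg, hPdeg]) hp.ne_zero (by rw [hp.leadingCoeff, hPm.leadingCoeff])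
    calc (p - P).degree < p.degree := h1
      _ ≤ _ := by rw [degree_eq_natDegree hp.ne_zero, hdeg, Finset.card_range]
  have h0 := Polynomial.eq_zero_of_degree_lt_of_eval_index_eq_zero (Finset.range n) hinj hdlt
    (fun i hi => by
      rw [eval_sub, hroot i (Finset.mem_range.1 hi), hP, eval_prod, Finset.prod_eq_zero hi]
      · ring
      · simp)
  exact sub_eq_zero.1 h0

lemma prod_neg_eq {s : Finset ℕ} (f : ℕ → ℝ) :
    ∏ k ∈ s, f k = (-1:ℝ)^s.card * ∏ k ∈ s, (-f k) := by
  rw [← Finset.prod_const, ← Finset.prod_mul_distrib]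
  simp

end Aux

/-- under the same interlacing hypotheses, for `|z| > max(|m|, |M|)` one has
`|q(z)/p(z)| ≥ 1/(2|z|)`. -/
theorem ratio_bound_below (n : ℕ) (hn : 1 ≤ n) (p q : Polynomial ℝ)
    (hp : p.Monic) (hpdeg : p.natDegree = n)
    (hq : q.Monic) (hqdeg : q.natDegree = n - 1)
    (y y' : ℕ → ℝ)
    (hyroot : ∀ j < n, p.eval (y j) = 0)
    (hymono : ∀ j k : ℕ, j < k → k < n → y j < y k)
    (hy'root : ∀ j < n - 1, q.eval (y' j) = 0)
    (hy'mono : ∀ j k : ℕ, j < k → k < n - 1 → y' j < y' k)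
    (hinterlace : ∀ j < n - 1, y j < y' j ∧ y' j < y (j + 1))
    (m M : ℝ) (hmM : m ≤ M)
    (hyIn : ∀ j < n, y j ∈ Set.Icc m M)
    (hy'In : ∀ j < n - 1, y' j ∈ Set.Icc m M) :
    ∀ z : ℂ, max |m| |M| < ‖z‖ →
      1 / (2 * ‖z‖) ≤ ‖Polynomial.aeval z q / Polynomial.aeval z p‖ := by
  -- injectivity of nodes
  have hinj : Set.InjOn y (Finset.range n) := by
    intro a ha b hb hab
    simp only [Finset.coe_range, Set.mem_Iio] at ha hb
    by_contra hne
    rcases Nat.lt_or_ge a b with h | h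
    · exact absurd hab (ne_of_lt (hymono a b h hb))
    · exact absurd hab.symm (ne_of_lt (hymono b a (by omega) ha))
  have hinj' : Set.InjOn y' (Finset.range (n-1)) := by
    intro a ha b hb hab
    simp only [Finset.coe_range, Set.mem_Iio] at ha hb
    by_contra hne
    rcases Nat.lt_or_ge a b with h | h
    · exact absurd hab (ne_of_lt (hy'mono a b h hb))
    · exact absurd hab.symm (ne_of_lt (hy'mono b a (by omega) ha))
  -- factorizations
  have hpfact := monic_eq_prod_of_roots hp hpdeg y hinj hyroot
  have hqfact := monic_eq_prod_of_roots hq hqdeg y' hinj' hy'root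
  -- the coefficients
  set D : ℕ → ℝ := fun i => ∏ j ∈ (Finset.range n).erase i, (y i - y j) with hD
  set c : ℕ → ℝ := fun i => q.eval (y i) * (D i)⁻¹ with hc
  have hDne : ∀ i ∈ Finset.range n, D i ≠ 0 := by
    intro i hi
    rw [hD]
    refine Finset.prod_ne_zero_iff.2 fun j hj => sub_ne_zero.2 fun he => ?_
    have := hinj (by simpa using Finset.mem_range.1 hi)
      (by simpa using Finset.mem_range.1 (Finset.mem_of_mem_erase hj)) he
    exact (Finset.mem_erase.1 hj).1 this.symm
  -- nonnegativity of the coefficients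
  have hcnn : ∀ i ∈ Finset.range n, 0 ≤ c i := by
    intro i hi
    rw [Finset.mem_range] at hi
    have hile : i ≤ n - 1 := by omega
    -- numerator
    have hqeval : q.eval (y i) = ∏ k ∈ Finset.range (n-1), (y i - y' k) := by
      rw [hqfact, eval_prod]; simp
    have hsplitN : q.eval (y i)
        = (∏ k ∈ Finset.range i, (y i - y' k)) * ∏ k ∈ Finset.Ico i (n-1), (y i - y' k) := by
      rw [hqeval, Finset.prod_range_mul_prod_Ico _ hile]
    have hA : 0 < ∏ k ∈ Finset.range i, (y i - y' k) := by
      refine Finset.prod_pos fun k hk => ?_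
      rw [Finset.mem_range] at hk
      have h1 : y' k < y (k+1) := (hinterlace k (by omega)).2
      have h2 : y (k+1) ≤ y i := by
        rcases eq_or_lt_of_le (show k+1 ≤ i by omega) with h | h
        · rw [h]
        · exact (hymono (k+1) i h hi).le
      linarith
    have hB : ∀ k ∈ Finset.Ico i (n-1), y i - y' k < 0 := by
      intro k hk
      rw [Finset.mem_Ico] at hk
      have h1 : y i ≤ y k := by
        rcases eq_or_lt_of_le hk.1 with h | h
        · rw [h]
        · exact (hymono i k h (by omega)).le
      have h2 : y k < y' k := (hinterlace k hk.2).1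
      linarith
    -- denominator
    have herase : (Finset.range n).erase i = Finset.range i ∪ Finset.Ico (i+1) n := by
      ext a
      simp only [Finset.mem_erase, Finset.mem_range, Finset.mem_union, Finset.mem_Ico]
      omega
    have hdisj : Disjoint (Finset.range i) (Finset.Ico (i+1) n) := by
      rw [Finset.disjoint_left]
      intro a ha hb
      rw [Finset.mem_range] at ha
      rw [Finset.mem_Ico] at hb
      omega
    have hsplitD : D i = (∏ j ∈ Finset.range i, (y i - y j)) * ∏ j ∈ Finset.Ico (i+1) n, (y i - y j) := by
      show (∏ j ∈ (Finset.range n).erase i, (y i - y j)) = _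
      rw [herase, Finset.prod_union hdisj]
    have hC : 0 < ∏ j ∈ Finset.range i, (y i - y j) := by
      refine Finset.prod_pos fun k hk => ?_
      rw [Finset.mem_range] at hk
      have := hymono k i hk hi
      linarith
    have hE : ∀ j ∈ Finset.Ico (i+1) n, y i - y j < 0 := by
      intro j hj
      rw [Finset.mem_Ico] at hj
      have := hymono i j hj.1 hj.2
      linarith
    -- put signs together
    have hcardB : (Finset.Ico i (n-1)).card = n - 1 - i := Nat.card_Ico i (n-1)
    have hcardE : (Finset.Ico (i+1) n).card = n - 1 - i := by rw [Nat.card_Ico]; omega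
    have hBpos : 0 < ∏ k ∈ Finset.Ico i (n-1), -(y i - y' k) :=
      Finset.prod_pos fun k hk => by linarith [hB k hk]
    have hEpos : 0 < ∏ j ∈ Finset.Ico (i+1) n, -(y i - y j) :=
      Finset.prod_pos fun j hj => by linarith [hE j hj]
    have hBneg : ∏ k ∈ Finset.Ico i (n-1), (y i - y' k)
        = (-1:ℝ)^(n-1-i) * ∏ k ∈ Finset.Ico i (n-1), -(y i - y' k) := by
      rw [prod_neg_eq (fun k => y i - y' k), hcardB]
    have hEneg : ∏ j ∈ Finset.Ico (i+1) n, (y i - y j)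
        = (-1:ℝ)^(n-1-i) * ∏ j ∈ Finset.Ico (i+1) n, -(y i - y j) := by
      rw [prod_neg_eq (fun j => y i - y j), hcardE]
    have hNeq : q.eval (y i) = (-1:ℝ)^(n-1-i) *
        ((∏ k ∈ Finset.range i, (y i - y' k)) * ∏ k ∈ Finset.Ico i (n-1), -(y i - y' k)) := by
      rw [hsplitN, hBneg]; ring
    have hDeq : D i = (-1:ℝ)^(n-1-i) *
        ((∏ j ∈ Finset.range i, (y i - y j)) * ∏ j ∈ Finset.Ico (i+1) n, -(y i - y j)) := by
      rw [hsplitD, hEneg]; ring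
    have hsgn : ((-1:ℝ)^(n-1-i)) * ((-1:ℝ)^(n-1-i)) = 1 := by
      rw [← pow_add]
      exact Even.neg_one_pow ⟨n-1-i, rfl⟩
    have hND : 0 ≤ q.eval (y i) * D i := by
      rw [hNeq, hDeq]
      nlinarith [mul_pos (mul_pos hA hBpos) (mul_pos hC hEpos), hsgn,
        mul_pos hA hBpos, mul_pos hC hEpos]
    have hD2 : c i = (q.eval (y i) * D i) / (D i)^2 := by
      have hDnei := hDne i (Finset.mem_range.2 hi)
      rw [hc]
      field_simp
    rw [hD2]
    positivity
  -- interpolation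
  have hdegq : q.degree < ((Finset.range n).card : WithBot ℕ) := by
    rw [Finset.card_range, degree_eq_natDegree hq.ne_zero, hqdeg]
    exact_mod_cast Nat.sub_lt hn one_pos
  have hqinterp : q = Lagrange.interpolate (Finset.range n) y (fun i => q.eval (y i)) :=
    Lagrange.eq_interpolate hinj hdegq
  -- the coefficients sum to 1
  have hbcoeff : ∀ i ∈ Finset.range n, (Lagrange.basis (Finset.range n) y i).coeff (n-1)
      = (D i)⁻¹ := by
    intro i hi
    have hb : (Lagrange.basis (Finset.range n) y i).natDegree = n - 1 := by
      rw [Lagrange.natDegree_basis hinj hi, Finset.card_range]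
    rw [← hb, coeff_natDegree, Lagrange.basis, leadingCoeff_prod]
    have : ∀ j ∈ (Finset.range n).erase i,
        (Lagrange.basisDivisor (y i) (y j)).leadingCoeff = (y i - y j)⁻¹ := by
      intro j hj
      rw [Lagrange.basisDivisor, leadingCoeff_mul, leadingCoeff_X_sub_C, leadingCoeff_C, mul_one]
    rw [Finset.prod_congr rfl this, ← Finset.prod_inv_distrib]
  have hsum : ∑ i ∈ Finset.range n, c i = 1 := by
    have h1 : q.coeff (n-1) = 1 := by
      rw [← hqdeg]; exact hq.coeff_natDegree
    have h2 : q.coeff (n-1) = ∑ i ∈ Finset.range n, c i := by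
      conv_lhs => rw [hqinterp]
      rw [Lagrange.interpolate_apply, Polynomial.finset_sum_coeff]
      refine Finset.sum_congr rfl fun i hi => ?_
      rw [coeff_C_mul, hbcoeff i hi]
    rw [← h2, h1]
  -- complex estimates
  intro z hz
  have habs : ∀ t : ℝ, t ∈ Set.Icc m M → |t| < ‖z‖ := by
    intro t ht
    refine lt_of_le_of_lt (abs_le.2 ⟨?_, ?_⟩) hz
    · calc -(max |m| |M|) ≤ -|m| := by simp [le_max_left]
        _ ≤ m := neg_abs_le m
        _ ≤ t := ht.1
    · calc t ≤ M := ht.2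
        _ ≤ |M| := le_abs_self M
        _ ≤ max |m| |M| := le_max_right _ _
  have hyabs : ∀ j < n, |y j| < ‖z‖ := fun j hj => habs _ (hyIn j hj)
  have hzy : ∀ j ∈ Finset.range n, (z - (y j : ℂ)) ≠ 0 := by
    intro j hj he
    have hzj : z = ((y j : ℝ) : ℂ) := by linear_combination he
    have := hyabs j (Finset.mem_range.1 hj)
    rw [hzj, Complex.norm_real, Real.norm_eq_abs] at this
    exact absurd this (lt_irrefl _)
  have hpz : (aeval z) p = ∏ j ∈ Finset.range n, (z - (y j : ℂ)) := by
    rw [hpfact, map_prod]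
    refine Finset.prod_congr rfl fun j hj => ?_
    simp [Complex.coe_algebraMap]
  have hqz : (aeval z) q = ∑ i ∈ Finset.range n,
      (c i : ℂ) * ∏ j ∈ (Finset.range n).erase i, (z - (y j : ℂ)) := by
    conv_lhs => rw [hqinterp]
    rw [Lagrange.interpolate_apply, map_sum]
    refine Finset.sum_congr rfl fun i hi => ?_
    rw [map_mul, aeval_C, Lagrange.basis, map_prod]
    have hbd : ∀ j ∈ (Finset.range n).erase i,
        (aeval z) (Lagrange.basisDivisor (y i) (y j))
          = (((y i - y j)⁻¹ : ℝ) : ℂ) * (z - (y j : ℂ)) := by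
      intro j hj
      rw [Lagrange.basisDivisor]
      simp [Complex.coe_algebraMap]
    have hcast : (∏ j ∈ (Finset.range n).erase i, (((y i - y j)⁻¹ : ℝ) : ℂ))
        = (((D i)⁻¹ : ℝ) : ℂ) := by
      rw [hD]
      push_cast
      rw [← Finset.prod_inv_distrib]
    rw [Finset.prod_congr rfl hbd, Finset.prod_mul_distrib, hcast,
      Complex.coe_algebraMap, hc]
    push_cast
    ring
  have hpzne : (∏ j ∈ Finset.range n, (z - (y j : ℂ))) ≠ 0 :=
    Finset.prod_ne_zero_iff.2 hzy
  have hdiv : (aeval z) q / (aeval z) p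
      = ∑ i ∈ Finset.range n, (c i : ℂ) / (z - (y i : ℂ)) := by
    rw [hqz, hpz, Finset.sum_div]
    refine Finset.sum_congr rfl fun i hi => ?_
    rw [← Finset.prod_erase_mul (Finset.range n) _ hi, mul_comm ((c i : ℂ))]
    exact mul_div_mul_left _ _
      (Finset.prod_ne_zero_iff.2 fun j hj => hzy j (Finset.mem_of_mem_erase hj))
  set S : ℂ := ∑ i ∈ Finset.range n, (c i : ℂ) / (z - (y i : ℂ)) with hS
  have hre : 1/2 ≤ (z * S).re := by
    have hzS : z * S = ∑ i ∈ Finset.range n, (c i : ℂ) * (z / (z - (y i : ℂ))) := by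
      rw [hS, Finset.mul_sum]
      refine Finset.sum_congr rfl fun i hi => ?_
      ring
    rw [hzS, Complex.re_sum]
    have hterm : ∀ i ∈ Finset.range n,
        ((c i : ℂ) * (z / (z - (y i : ℂ)))).re = c i * (z / (z - (y i : ℂ))).re := by
      intro i hi
      rw [Complex.mul_re]
      simp
    rw [Finset.sum_congr rfl hterm]
    calc (1:ℝ)/2 = (∑ i ∈ Finset.range n, c i) * (1/2) := by rw [hsum]; ring
      _ = ∑ i ∈ Finset.range n, c i * (1/2) := by rw [Finset.sum_mul]
      _ ≤ _ := by
        refine Finset.sum_le_sum fun i hi => ?_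
        exact mul_le_mul_of_nonneg_left
          (re_half_le z (y i) (hyabs i (Finset.mem_range.1 hi))) (hcnn i hi)
  have h1 : (z * S).re ≤ ‖z * S‖ := Complex.re_le_norm _
  rw [norm_mul] at h1
  have hz0 : 0 < ‖z‖ := by
    have : (0:ℝ) ≤ max |m| |M| := le_trans (abs_nonneg m) (le_max_left _ _)
    linarith
  rw [hdiv, div_le_iff₀ (by positivity)]
  nlinarith [h1, hre]
end

section
/- The function φ satisfies the algebraic identity z·φ(z) = (1 + 4φ(z)/27)³ for every z ∈ ℂ \ [0,1]. -/
open Filter Topology Polynomial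

lemma ccbrt_cube (z : ℂ) : (ccbrt z) ^ 3 = z := by
  unfold ccbrt
  rw [mul_pow, ← Complex.exp_nat_mul]
  have h1 : ((‖z‖ ^ ((1:ℝ)/3) : ℝ) : ℂ) ^ 3
      = ((‖z‖ : ℝ) : ℂ) := by
    have : (‖z‖ ^ ((1:ℝ)/3)) ^ (3:ℕ) = ‖z‖ := by
      rw [← Real.rpow_natCast (‖z‖ ^ ((1:ℝ)/3)) 3,
        ← Real.rpow_mul (norm_nonneg z)]
      norm_num
    exact_mod_cast congrArg (Complex.ofReal) this
  have h2 : ((3:ℕ):ℂ) * (Complex.I * (Complex.arg z : ℂ) / 3)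
      = (Complex.arg z : ℂ) * Complex.I := by push_cast; ring
  rw [h1, h2, Complex.norm_mul_exp_arg_mul_I]

lemma csqrt_sq (z : ℂ) : (csqrt z) ^ 2 = z := by
  unfold csqrt argNN
  rw [mul_pow, ← Complex.exp_nat_mul]
  have h1 : ((‖z‖ ^ ((1:ℝ)/2) : ℝ) : ℂ) ^ 2
      = ((‖z‖ : ℝ) : ℂ) := by
    have : (‖z‖ ^ ((1:ℝ)/2)) ^ (2:ℕ) = ‖z‖ := by
      rw [← Real.rpow_natCast (‖z‖ ^ ((1:ℝ)/2)) 2,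
        ← Real.rpow_mul (norm_nonneg z)]
      norm_num
    exact_mod_cast congrArg (Complex.ofReal) this
  rw [h1]
  split_ifs with h
  · have h2 : ((2:ℕ):ℂ) * (Complex.I * ((Complex.arg z + 2*Real.pi : ℝ) : ℂ) / 2)
        = (Complex.arg z : ℂ) * Complex.I + 2*(Real.pi:ℂ)*Complex.I := by push_cast; ring
    rw [h2, Complex.exp_add, Complex.exp_two_pi_mul_I, mul_one,
      Complex.norm_mul_exp_arg_mul_I]
  · have h2 : ((2:ℕ):ℂ) * (Complex.I * ((Complex.arg z : ℝ) : ℂ) / 2)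
        = (Complex.arg z : ℂ) * Complex.I := by push_cast; ring
    rw [h2, Complex.norm_mul_exp_arg_mul_I]

lemma ccbrt_mul {u v : ℂ} (hu : u ≠ 0) (hv : v ≠ 0)
    (h : Complex.arg u + Complex.arg v ∈ Set.Ioc (-Real.pi) Real.pi) :
    ccbrt u * ccbrt v = ccbrt (u * v) := by
  unfold ccbrt
  rw [Complex.arg_mul hu hv h, norm_mul,
    Real.mul_rpow (norm_nonneg u) (norm_nonneg v)]
  push_cast
  rw [mul_mul_mul_comm, ← Complex.exp_add]
  congr 1
  ring

lemma omega_cube : ω₃ ^ 3 = 1 := by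
  unfold ω₃
  rw [← Complex.exp_nat_mul]
  rw [show ((3:ℕ):ℂ) * (2 * (Real.pi : ℂ) * Complex.I / 3) = 2 * Real.pi * Complex.I by
    push_cast; ring]
  exact Complex.exp_two_pi_mul_I

lemma key_algebra (a b c s ω : ℂ) (h1 : a^3 = -1+s) (h2 : b^3 = -1-s)
    (h3 : a*b = c) (h4 : ω^3 = 1) :
    c^3 * ((27/4) * ((3*ω/2)*c*(ω*a+b) - 1)) =
      (1 + 4*((27/4) * ((3*ω/2)*c*(ω*a+b) - 1))/27)^3 := by
  linear_combination (-(27:ℂ)/8)*c^3*h1 + (-(27:ℂ)/8)*c^3*h2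
    + (-(81:ℂ)/8)*ω*c^3*(ω*a+b)*h3
    + ((-(27:ℂ)/8)*c^3*a^3 + (-(27:ℂ)/8)*c^3*(ω*a+b)^3)*h4

/-- `z * phi z = (1 + 4 * phi z / 27)^3` for every `z` off the branch cut `[0,1]`. -/
theorem phi_algebraic_identity :
    ∀ z : ℂ, z ∉ (Complex.ofReal '' Set.Icc (0 : ℝ) 1) →
      z * phi z = (1 + 4 * phi z / 27) ^ 3 := by
  intro z hz
  have hz0 : z ≠ 0 := by
    rintro rfl; exact hz ⟨0, by norm_num, by norm_num⟩
  have hz1 : z ≠ 1 := by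
    rintro rfl; exact hz ⟨1, by norm_num, by norm_num⟩
  have h1z : (1 : ℂ) - z ≠ 0 := fun h => hz1 (by linear_combination -h)
  set s : ℂ := csqrt (1 - z) with hs_def
  have hs2 : s ^ 2 = 1 - z := csqrt_sq _
  have huv : (-1 + s) * (-1 - s) = z := by linear_combination -hs2
  have hu : (-1 + s) ≠ 0 := fun h => hz0 (by rw [← huv, h, zero_mul])
  have hv : (-1 - s) ≠ 0 := fun h => hz0 (by rw [← huv, h, mul_zero])
  -- the imaginary part of s
  set θ : ℝ := argNN (1 - z) with hθ_def
  have hθ0 : 0 ≤ θ := by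
    rw [hθ_def]; unfold argNN
    split_ifs with h
    · nlinarith [Complex.neg_pi_lt_arg (1 - z), Real.pi_pos]
    · linarith
  have hθ2 : θ < 2 * Real.pi := by
    rw [hθ_def]; unfold argNN
    split_ifs with h
    · nlinarith [Real.pi_pos]
    · nlinarith [Complex.arg_le_pi (1 - z), Real.pi_pos]
  set r : ℝ := ‖1 - z‖ ^ ((1:ℝ)/2) with hr_def
  have hrpos : 0 < r :=
    Real.rpow_pos_of_pos (norm_pos_iff.mpr h1z) _
  have hsim : s.im = r * Real.sin (θ / 2) := by
    rw [hs_def]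
    unfold csqrt
    rw [show Complex.I * ((argNN (1-z) : ℝ) : ℂ) / 2
        = ((argNN (1-z) / 2 : ℝ) : ℂ) * Complex.I by push_cast; ring]
    rw [Complex.mul_im, Complex.exp_ofReal_mul_I_im]
    rw [hr_def, hθ_def]
    simp
  have hsim_nonneg : 0 ≤ s.im := by
    rw [hsim]
    have : 0 ≤ Real.sin (θ / 2) :=
      Real.sin_nonneg_of_nonneg_of_le_pi (by linarith) (by linarith)
    positivity
  -- the key branch fact
  have hmem : Complex.arg (-1 + s) + Complex.arg (-1 - s)
      ∈ Set.Ioc (-Real.pi) Real.pi := by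
    rcases lt_or_eq_of_le hsim_nonneg with him | him
    · -- Im s > 0
      have imu : (0:ℝ) < (-1 + s).im := by simpa using him
      have imv : (-1 - s).im < 0 := by simpa using him
      have au_pos : 0 < Complex.arg (-1 + s) := by
        rcases lt_or_eq_of_le (Complex.arg_nonneg_iff.2 imu.le) with h | h
        · exact h
        · exact absurd ((Complex.arg_eq_zero_iff.1 h.symm).2) (by simpa using imu.ne')
      have au_le : Complex.arg (-1 + s) ≤ Real.pi := Complex.arg_le_pi _
      have av_neg : Complex.arg (-1 - s) < 0 := Complex.arg_neg_iff.2 imv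
      have av_gt : -Real.pi < Complex.arg (-1 - s) := Complex.neg_pi_lt_arg _
      exact ⟨by linarith, by linarith⟩
    · -- Im s = 0 : then θ = 0, s = r real with r > 1
      have hsin : Real.sin (θ / 2) = 0 := by
        rcases mul_eq_zero.1 (hsim ▸ him.symm) with h | h
        · exact absurd h hrpos.ne'
        · exact h
      have hθeq : θ = 0 := by
        by_contra h
        have h0 : 0 < θ / 2 := by
          rcases lt_or_eq_of_le hθ0 with h' | h'
          · linarith
          · exact absurd h'.symm h
        have := Real.sin_pos_of_pos_of_lt_pi h0 (by linarith)
        linarith [hsin ▸ this]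
      have harg : Complex.arg (1 - z) = 0 := by
        have h9 := hθ_def.symm.trans hθeq
        unfold argNN at h9
        split_ifs at h9 with h
        · nlinarith [Complex.neg_pi_lt_arg (1 - z), Real.pi_pos]
        · exact h9
      have hre : 0 < (1 - z).re := by
        rcases Complex.arg_eq_zero_iff.1 harg with ⟨h1, h2⟩
        rcases lt_or_eq_of_le h1 with h | h
        · exact h
        · exfalso
          apply h1z
          apply Complex.ext
          · simpa using h.symm
          · simpa using h2
      have hzim : z.im = 0 := by
        have := (Complex.arg_eq_zero_iff.1 harg).2
        simpa using this
      have hzre : z.re < 0 := by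
        by_contra h
        push_neg at h
        refine hz ⟨z.re, ⟨h, ?_⟩, ?_⟩
        · simp only [Complex.sub_re, Complex.one_re] at hre
          linarith
        · apply Complex.ext
          · simp
          · simp [hzim]
      have habs : ‖1 - z‖ = 1 - z.re := by
        rw [show (1:ℂ) - z = ((1 - z.re : ℝ) : ℂ) by
          apply Complex.ext
          · simp
          · simp [hzim]]
        rw [Complex.norm_real, Real.norm_eq_abs, abs_of_pos (by linarith)]
      have hr1 : 1 < r := by
        rw [hr_def, habs, Real.one_lt_rpow_iff_of_pos (by linarith)]
        exact Or.inl ⟨by linarith, by norm_num⟩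
      have hseq : s = (r : ℂ) := by
        rw [hs_def]
        unfold csqrt
        rw [← hθ_def, hθeq, ← hr_def]
        simp
      have argu : Complex.arg (-1 + s) = 0 := by
        rw [hseq]
        apply Complex.arg_eq_zero_iff.2
        constructor
        · simp; linarith
        · simp
      have argv : Complex.arg (-1 - s) = Real.pi := by
        rw [hseq]
        apply Complex.arg_eq_pi_iff.2
        constructor
        · simp; linarith
        · simp
      rw [argu, argv]
      exact ⟨by linarith [Real.pi_pos], by linarith⟩
  have hab : ccbrt (-1 + s) * ccbrt (-1 - s) = ccbrt z := by
    rw [ccbrt_mul hu hv hmem, huv]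
  have hc : (ccbrt z) ^ 3 = z := ccbrt_cube z
  have ha : (ccbrt (-1 + s)) ^ 3 = -1 + s := ccbrt_cube _
  have hb : (ccbrt (-1 - s)) ^ 3 = -1 - s := ccbrt_cube _
  have key := key_algebra (ccbrt (-1 + s)) (ccbrt (-1 - s)) (ccbrt z) s ω₃ ha hb hab omega_cube
  rw [hc] at key
  unfold phi
  rw [← hs_def]
  exact key
end

section
/- Near the branch point 1, the logarithmic derivative of φ satisfies |φ'(1+εe^{iθ})/φ(1+εe^{iθ})| = O(ε^{−1/2}) as ε → 0⁺: there exist constants C > 0 and ε₀ > 0 such that for all ε ∈ (0,ε₀) and all θ ∈ (−π,π), |φ'(1+εe^{iθ})/φ(1+εe^{iθ})| ≤ C·ε^{−1/2}. -/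
open Filter Topology Polynomial

namespace PhiAux

open Complex

lemma ccbrt_eq_cpow (z : ℂ) : ccbrt z = z ^ ((1:ℂ)/3) := by
  by_cases hz : z = 0
  · subst hz
    rw [Complex.zero_cpow (by norm_num : ((1:ℂ)/3) ≠ 0)]
    simp [ccbrt, Real.zero_rpow (by norm_num : ((1:ℝ)/3) ≠ 0)]
  · rw [Complex.cpow_def_of_ne_zero hz, Complex.log]
    rw [show ((Real.log (‖z‖) : ℂ) + (Complex.arg z : ℂ) * I) * ((1:ℂ)/3)
        = ((Real.log (‖z‖) / 3 : ℝ) : ℂ) + I * (Complex.arg z : ℂ) / 3 by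
      push_cast; ring]
    rw [Complex.exp_add, ← Complex.ofReal_exp, ccbrt]
    congr 2
    rw [Real.rpow_def_of_pos (norm_pos_iff.mpr hz)]
    ring_nf

lemma csqrt_eq_cpow {w : ℂ} (hw : w ≠ 0) (ha : Complex.arg w ≠ 0) :
    csqrt w = Complex.I * (-w) ^ ((1:ℂ)/2) := by
  have hnw : -w ≠ 0 := neg_ne_zero.mpr hw
  have key : Complex.arg (-w) + Real.pi = argNN w := by
    unfold argNN
    rcases lt_trichotomy (Complex.arg w) 0 with h | h | h
    · rw [if_pos h, Complex.arg_neg_eq_arg_add_pi_of_im_neg (Complex.arg_neg_iff.mp h)]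
      ring
    · exact absurd h ha
    · rw [if_neg (not_lt.mpr h.le)]
      rcases lt_trichotomy w.im 0 with h2 | h2 | h2
      · exact absurd (Complex.arg_neg_iff.mpr h2) (not_lt.mpr h.le)
      · have hre : w.re < 0 := by
          rcases lt_trichotomy w.re 0 with h3 | h3 | h3
          · exact h3
          · exact absurd (Complex.ext h3.symm h2.symm) (Ne.symm hw)
          · exact absurd (Complex.arg_eq_zero_iff.mpr ⟨h3.le, h2⟩) ha
        have harg : Complex.arg w = Real.pi := Complex.arg_eq_pi_iff.mpr ⟨hre, h2⟩
        have : Complex.arg (-w) = 0 := by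
          apply Complex.arg_eq_zero_iff.mpr
          constructor
          · simp [Complex.neg_re]; linarith
          · simp [Complex.neg_im, h2]
        rw [this, harg]; ring
      · rw [Complex.arg_neg_eq_arg_sub_pi_of_im_pos h2]; ring
  rw [Complex.cpow_def_of_ne_zero hnw, Complex.log, norm_neg, csqrt]
  have hI : Complex.I = Complex.exp ((Real.pi : ℂ) * I / 2) := by
    rw [show ((Real.pi : ℂ) * I / 2) = ((Real.pi/2 : ℝ) : ℂ) * I by push_cast; ring,
      Complex.exp_mul_I, ← Complex.ofReal_cos, ← Complex.ofReal_sin,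
      Real.cos_pi_div_two, Real.sin_pi_div_two]
    simp
  nth_rewrite 2 [hI]
  rw [← Complex.exp_add]
  rw [show (Real.pi : ℂ) * I / 2 + ((Real.log (‖w‖) : ℂ) + (Complex.arg (-w) : ℂ) * I) * ((1:ℂ)/2)
      = ((Real.log (‖w‖) / 2 : ℝ) : ℂ) + I * ((Complex.arg (-w) + Real.pi : ℝ) : ℂ) / 2 by
    push_cast; ring]
  rw [key, Complex.exp_add, ← Complex.ofReal_exp]
  congr 2
  rw [Real.rpow_def_of_pos (norm_pos_iff.mpr hw)]
  ring_nf

lemma neg_cpow_third_of_im_neg {w : ℂ} (h : w.im < 0) :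
    (-w) ^ ((1:ℂ)/3) = Complex.exp ((Real.pi : ℂ) * I / 3) * w ^ ((1:ℂ)/3) := by
  have hw : w ≠ 0 := fun hw => by simp [hw] at h
  have hnw : -w ≠ 0 := neg_ne_zero.mpr hw
  rw [Complex.cpow_def_of_ne_zero hnw, Complex.cpow_def_of_ne_zero hw, Complex.log, Complex.log,
    norm_neg, Complex.arg_neg_eq_arg_add_pi_of_im_neg h, ← Complex.exp_add]
  congr 1
  push_cast
  ring

lemma neg_cpow_third_of_im_pos {w : ℂ} (h : 0 < w.im) :
    (-w) ^ ((1:ℂ)/3) = Complex.exp (-((Real.pi : ℂ) * I) / 3) * w ^ ((1:ℂ)/3) := by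
  have hw : w ≠ 0 := fun hw => by simp [hw] at h
  have hnw : -w ≠ 0 := neg_ne_zero.mpr hw
  rw [Complex.cpow_def_of_ne_zero hnw, Complex.cpow_def_of_ne_zero hw, Complex.log, Complex.log,
    norm_neg, Complex.arg_neg_eq_arg_sub_pi_of_im_pos h, ← Complex.exp_add]
  congr 1
  push_cast
  ring

lemma cbrt_one_add_sub_one {w : ℂ} (h : ‖w‖ ≤ 1/2) :
    ‖(1+w) ^ ((1:ℂ)/3) - 1‖ ≤ ‖w‖ := by
  have h1 : (1 + w) ≠ 0 := by
    intro h0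
    have : ‖w‖ = 1 := by
      have : w = -1 := by linear_combination h0
      simp [this]
    linarith
  have hL : ‖Complex.log (1+w)‖ ≤ (3/2) * ‖w‖ := by
    simpa using Complex.norm_log_one_add_half_le_self
      (by simpa using h)
  have hL3 : ‖Complex.log (1+w) * ((1:ℂ)/3)‖ ≤ (1/2) * ‖w‖ := by
    rw [norm_mul]
    have : ‖(1:ℂ)/3‖ = 1/3 := by norm_num [norm_div]
    rw [this]
    nlinarith [norm_nonneg w]
  have hle1 : ‖Complex.log (1+w) * ((1:ℂ)/3)‖ ≤ 1 := by nlinarith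
  rw [Complex.cpow_def_of_ne_zero h1]
  calc ‖Complex.exp (Complex.log (1+w) * ((1:ℂ)/3)) - 1‖
      ≤ 2 * ‖Complex.log (1+w) * ((1:ℂ)/3)‖ := Complex.norm_exp_sub_one_le hle1
    _ ≤ ‖w‖ := by linarith

lemma rpow_neg_twothird_le {t : ℝ} (h : 1/2 ≤ t) : t ^ (((1:ℝ)/3 - 1)) ≤ 2 := by
  have ht : (0:ℝ) < t := by linarith
  have h1 : ((1:ℝ)/2) ^ ((2:ℝ)/3) ≥ 1/2 := by
    have := Real.rpow_le_rpow_of_exponent_ge (by norm_num : (0:ℝ) < 1/2)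
      (by norm_num : (1:ℝ)/2 ≤ 1) (by norm_num : (2:ℝ)/3 ≤ 1)
    rwa [Real.rpow_one] at this
  have h2 : ((1:ℝ)/2) ^ ((2:ℝ)/3) ≤ t ^ ((2:ℝ)/3) :=
    Real.rpow_le_rpow (by norm_num) h (by norm_num)
  have h3 : (1:ℝ)/2 ≤ t ^ ((2:ℝ)/3) := le_trans h1 h2
  have h4 : t ^ ((1:ℝ)/3 - 1) = (t ^ ((2:ℝ)/3))⁻¹ := by
    rw [← Real.rpow_neg ht.le]
    norm_num
  rw [h4]
  calc (t ^ ((2:ℝ)/3))⁻¹ ≤ ((1:ℝ)/2)⁻¹ := by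
        apply inv_anti₀ (by norm_num) h3
    _ = 2 := by norm_num

lemma rpow_third_le {t : ℝ} (h0 : 0 ≤ t) (h : t ≤ 2) : t ^ ((1:ℝ)/3) ≤ 2 := by
  calc t ^ ((1:ℝ)/3) ≤ (2:ℝ) ^ ((1:ℝ)/3) := Real.rpow_le_rpow h0 h (by norm_num)
    _ ≤ (2:ℝ) ^ (1:ℝ) := Real.rpow_le_rpow_of_exponent_le (by norm_num) (by norm_num)
    _ = 2 := Real.rpow_one 2

lemma exp_pi_third : Complex.exp ((Real.pi : ℂ) * I / 3) = 1/2 + ((Real.sqrt 3 : ℝ) : ℂ)/2 * I := by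
  rw [show ((Real.pi : ℂ) * I / 3) = ((Real.pi/3 : ℝ) : ℂ) * I by push_cast; ring,
    Complex.exp_mul_I, ← Complex.ofReal_cos, ← Complex.ofReal_sin,
    Real.cos_pi_div_three, Real.sin_pi_div_three]
  push_cast
  ring

lemma exp_neg_pi_third : Complex.exp (-((Real.pi : ℂ) * I) / 3) = 1/2 - ((Real.sqrt 3 : ℝ) : ℂ)/2 * I := by
  rw [show (-((Real.pi : ℂ) * I) / 3) = ((-(Real.pi/3) : ℝ) : ℂ) * I by push_cast; ring,
    Complex.exp_mul_I, ← Complex.ofReal_cos, ← Complex.ofReal_sin,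
    Real.cos_neg, Real.sin_neg, Real.cos_pi_div_three, Real.sin_pi_div_three]
  push_cast
  ring

lemma omega_val : ω₃ = -1/2 + ((Real.sqrt 3 : ℝ) : ℂ)/2 * I := by
  rw [ω₃, show (2 * (Real.pi : ℂ) * I / 3) = ((2*Real.pi/3 : ℝ) : ℂ) * I by push_cast; ring,
    Complex.exp_mul_I, ← Complex.ofReal_cos, ← Complex.ofReal_sin,
    show 2*Real.pi/3 = Real.pi - Real.pi/3 by ring,
    Real.cos_pi_sub, Real.sin_pi_sub, Real.cos_pi_div_three, Real.sin_pi_div_three]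
  push_cast
  ring

lemma sqrt3_sq : ((Real.sqrt 3 : ℝ) : ℂ) * ((Real.sqrt 3 : ℝ) : ℂ) = 3 := by
  rw [← Complex.ofReal_mul, Real.mul_self_sqrt (by norm_num)]
  norm_num

lemma k1 : ω₃ * Complex.exp ((Real.pi : ℂ) * I / 3) = -1 := by
  rw [omega_val, exp_pi_third]
  linear_combination (Complex.I^2/4)*sqrt3_sq + (3/4 : ℂ)*Complex.I_sq

lemma k2 : (3*ω₃/2) * (-1 + Complex.exp (-((Real.pi : ℂ) * I) / 3)) = 3/2 := by
  rw [omega_val, exp_neg_pi_third]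
  linear_combination (-(3:ℂ)/8*Complex.I^2)*sqrt3_sq + (-(9:ℂ)/8)*Complex.I_sq

lemma abs_omega : ‖ω₃‖ = 1 := by
  rw [ω₃, Complex.norm_exp]
  norm_num [Complex.div_re, Complex.mul_re, Complex.mul_im]

lemma abs_exp_neg_pi_third : ‖Complex.exp (-((Real.pi : ℂ) * I) / 3)‖ = 1 := by
  rw [Complex.norm_exp]
  norm_num [Complex.div_re, Complex.neg_re, Complex.mul_re, Complex.mul_im]

/-- The branch-rewritten version of `phi`. -/
noncomputable def gg (z : ℂ) : ℂ :=
  27/4 * ((3*ω₃/2) * z ^ ((1:ℂ)/3) *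
    (ω₃ * (-1 + Complex.I * (z-1) ^ ((1:ℂ)/2)) ^ ((1:ℂ)/3) +
     (-1 - Complex.I * (z-1) ^ ((1:ℂ)/2)) ^ ((1:ℂ)/3)) - 1)

lemma phi_eq_gg {z : ℂ} (hz : z - 1 ∈ Complex.slitPlane) : phi z = gg z := by
  have h1 : (1 - z) ≠ 0 := by
    intro h0
    have : z - 1 = 0 := by linear_combination -h0
    rw [this] at hz
    exact Complex.slitPlane_ne_zero hz rfl
  have h2 : Complex.arg (1 - z) ≠ 0 := by
    intro h0
    rcases Complex.arg_eq_zero_iff.mp h0 with ⟨hre, him⟩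
    rcases Complex.mem_slitPlane_iff.mp hz with h | h
    · have : (z - 1).re = -(1 - z).re := by simp [Complex.sub_re]
      rw [this] at h; linarith
    · have : (z - 1).im = -(1 - z).im := by simp [Complex.sub_im]
      rw [this, him] at h; simp at h
  rw [phi, gg, csqrt_eq_cpow h1 h2, ccbrt_eq_cpow, ccbrt_eq_cpow, ccbrt_eq_cpow,
    show -(1 - z) = z - 1 by ring]

end PhiAux


set_option maxHeartbeats 2000000 in
/-- near the branch point `1`, `|phi'/phi|` is `O(ε^(-1/2))`. -/
theorem phi_logderiv_near_one :
    ∃ C > (0 : ℝ), ∃ ε₀ > (0 : ℝ), ∀ ε : ℝ, ε ∈ Set.Ioo 0 ε₀ →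
      ∀ θ ∈ Set.Ioo (-Real.pi) Real.pi,
        ‖deriv phi (1 + (ε : ℂ) * Complex.exp (Complex.I * (θ : ℂ))) /
            phi (1 + (ε : ℂ) * Complex.exp (Complex.I * (θ : ℂ)))‖
          ≤ C * ε ^ (-(1 : ℝ) / 2) := by
  refine ⟨50, by norm_num, 1/10000, by norm_num, ?_⟩
  rintro ε ⟨hε0, hε1⟩ θ ⟨hθ1, hθ2⟩
  have hπ := Real.pi_pos
  set z : ℂ := 1 + (ε : ℂ) * Complex.exp (Complex.I * (θ : ℂ)) with hzdef
  have hz1 : z - 1 = (ε : ℂ) * Complex.exp (Complex.I * (θ : ℂ)) := by rw [hzdef]; ring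
  have habs1 : ‖z - 1‖ = ε := by
    rw [hz1, norm_mul, Complex.norm_real, Real.norm_eq_abs, abs_of_pos hε0,
      show Complex.I * (θ:ℂ) = (θ:ℂ) * Complex.I by ring, Complex.norm_exp_ofReal_mul_I, mul_one]
  have hz1ne : z - 1 ≠ 0 := by
    intro h; rw [h] at habs1; simp at habs1; exact absurd habs1.symm (ne_of_gt hε0)
  have harg1 : Complex.arg (z - 1) = θ := by
    rw [hz1, show Complex.I * (θ:ℂ) = (θ:ℂ) * Complex.I by ring, Complex.exp_mul_I,
      Complex.arg_real_mul _ hε0]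
    exact Complex.arg_cos_add_sin_mul_I ⟨hθ1, hθ2.le⟩
  have hsqε : Real.sqrt ε ≤ 1/100 := by
    rw [show (1:ℝ)/100 = Real.sqrt (1/10000) by
      rw [show (1:ℝ)/10000 = (1/100)^2 by norm_num, Real.sqrt_sq (by norm_num)]]
    exact Real.sqrt_le_sqrt hε1.le
  have hsqpos : 0 < Real.sqrt ε := Real.sqrt_pos.mpr hε0
  -- explicit square root
  have hlog1 : Complex.log (z-1) = ((Real.log ε : ℝ) : ℂ) + (θ:ℂ) * Complex.I := by
    rw [Complex.log, habs1, harg1]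
  have hhalf : (z-1) ^ ((1:ℂ)/2)
      = ((Real.sqrt ε : ℝ) : ℂ) * Complex.exp (((θ/2 : ℝ):ℂ) * Complex.I) := by
    rw [Complex.cpow_def_of_ne_zero hz1ne, hlog1,
      show (((Real.log ε : ℝ):ℂ) + (θ:ℂ)*Complex.I) * ((1:ℂ)/2)
        = ((Real.log ε/2 : ℝ):ℂ) + ((θ/2:ℝ):ℂ) * Complex.I by push_cast; ring,
      Complex.exp_add, ← Complex.ofReal_exp]
    congr 2
    rw [Real.sqrt_eq_rpow, Real.rpow_def_of_pos hε0]; ring_nf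
  set S : ℂ := Complex.I * (z - 1) ^ ((1:ℂ)/2) with hSdef
  have hSim : S.im = Real.sqrt ε * Real.cos (θ/2) := by
    rw [hSdef, hhalf]
    simp only [Complex.mul_im, Complex.mul_re, Complex.I_re, Complex.I_im,
      Complex.ofReal_re, Complex.ofReal_im, Complex.exp_ofReal_mul_I_re,
      Complex.exp_ofReal_mul_I_im]
    ring
  have hcos : 0 < Real.cos (θ/2) :=
    Real.cos_pos_of_mem_Ioo ⟨by linarith, by linarith⟩
  have hSimpos : 0 < S.im := by rw [hSim]; positivity
  have hSabs : ‖S‖ = Real.sqrt ε := by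
    rw [hSdef, norm_mul, Complex.norm_I, one_mul,
      show ((1:ℂ)/2) = (((1:ℝ)/2 : ℝ) : ℂ) by norm_num,
      Complex.norm_cpow_real, habs1, Real.sqrt_eq_rpow]
  -- slit plane memberships
  have hslit1 : z - 1 ∈ Complex.slitPlane := by
    rw [Complex.mem_slitPlane_iff]
    by_cases him : (z-1).im = 0
    · left
      rcases lt_trichotomy ((z-1).re) 0 with h | h | h
      · have := Complex.arg_eq_pi_iff.mpr ⟨h, him⟩
        rw [harg1] at this
        exact absurd this (ne_of_lt hθ2)
      · exact absurd (Complex.ext (by simpa using h) (by simpa using him)) hz1ne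
      · exact h
    · right; exact him
  have hslitz : z ∈ Complex.slitPlane := by
    rw [Complex.mem_slitPlane_iff]; left
    have h1 : |(z-1).re| ≤ ε := by rw [← habs1]; exact Complex.abs_re_le_norm _
    have h2 : (z-1).re = z.re - 1 := by simp
    rcases abs_le.mp h1 with ⟨h3, _⟩
    rw [h2] at h3
    linarith
  have hUim : (0:ℝ) < (-1 + S).im := by
    have : (-1 + S).im = S.im := by simp
    rw [this]; exact hSimpos
  have hVim : (-1 - S).im < 0 := by
    have : (-1 - S).im = -S.im := by simp
    rw [this]; linarith
  have hslitU : (-1 + S) ∈ Complex.slitPlane :=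
    Complex.mem_slitPlane_iff.mpr (Or.inr (ne_of_gt hUim))
  have hslitV : (-1 - S) ∈ Complex.slitPlane :=
    Complex.mem_slitPlane_iff.mpr (Or.inr (ne_of_lt hVim))
  -- derivative chain
  have hd2 : HasDerivAt (fun w : ℂ => (w - 1) ^ ((1:ℂ)/2))
      (((1:ℂ)/2) * (z-1) ^ ((1:ℂ)/2 - 1) * 1) z :=
    ((hasDerivAt_id z).sub_const 1).cpow_const hslit1
  have hd3 : HasDerivAt (fun w : ℂ => Complex.I * (w-1) ^ ((1:ℂ)/2))
      (Complex.I * (((1:ℂ)/2) * (z-1) ^ ((1:ℂ)/2 - 1) * 1)) z := hd2.const_mul Complex.I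
  have hdU : HasDerivAt (fun w : ℂ => -1 + Complex.I * (w-1) ^ ((1:ℂ)/2))
      (Complex.I * (((1:ℂ)/2) * (z-1) ^ ((1:ℂ)/2 - 1) * 1)) z := hd3.const_add (-1)
  have hdV : HasDerivAt (fun w : ℂ => -1 - Complex.I * (w-1) ^ ((1:ℂ)/2))
      (-(Complex.I * (((1:ℂ)/2) * (z-1) ^ ((1:ℂ)/2 - 1) * 1))) z := hd3.const_sub (-1)
  have hdU3 : HasDerivAt (fun w : ℂ => (-1 + Complex.I * (w-1) ^ ((1:ℂ)/2)) ^ ((1:ℂ)/3))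
      (((1:ℂ)/3) * (-1 + S) ^ ((1:ℂ)/3 - 1)
        * (Complex.I * (((1:ℂ)/2) * (z-1) ^ ((1:ℂ)/2 - 1) * 1))) z :=
    hdU.cpow_const hslitU
  have hdV3 : HasDerivAt (fun w : ℂ => (-1 - Complex.I * (w-1) ^ ((1:ℂ)/2)) ^ ((1:ℂ)/3))
      (((1:ℂ)/3) * (-1 - S) ^ ((1:ℂ)/3 - 1)
        * (-(Complex.I * (((1:ℂ)/2) * (z-1) ^ ((1:ℂ)/2 - 1) * 1)))) z :=
    hdV.cpow_const hslitV
  have hdB : HasDerivAt (fun w : ℂ =>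
      ω₃ * (-1 + Complex.I * (w-1) ^ ((1:ℂ)/2)) ^ ((1:ℂ)/3)
        + (-1 - Complex.I * (w-1) ^ ((1:ℂ)/2)) ^ ((1:ℂ)/3))
      (ω₃ * (((1:ℂ)/3) * (-1 + S) ^ ((1:ℂ)/3 - 1)
        * (Complex.I * (((1:ℂ)/2) * (z-1) ^ ((1:ℂ)/2 - 1) * 1)))
       + ((1:ℂ)/3) * (-1 - S) ^ ((1:ℂ)/3 - 1)
        * (-(Complex.I * (((1:ℂ)/2) * (z-1) ^ ((1:ℂ)/2 - 1) * 1)))) z :=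
    (hdU3.const_mul ω₃).add hdV3
  have hdz3 : HasDerivAt (fun w : ℂ => w ^ ((1:ℂ)/3)) (((1:ℂ)/3) * z ^ ((1:ℂ)/3 - 1)) z :=
    (Complex.hasStrictDerivAt_cpow_const hslitz).hasDerivAt
  have hdf : HasDerivAt (fun w : ℂ => 3*ω₃/2 * w ^ ((1:ℂ)/3))
      (3*ω₃/2 * (((1:ℂ)/3) * z ^ ((1:ℂ)/3 - 1))) z := hdz3.const_mul (3*ω₃/2)
  set Bz : ℂ := ω₃ * (-1 + S) ^ ((1:ℂ)/3) + (-1 - S) ^ ((1:ℂ)/3) with hBzdef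
  set T1 : ℂ := 3*ω₃/2 * (((1:ℂ)/3) * z ^ ((1:ℂ)/3 - 1)) * Bz with hT1def
  set T2 : ℂ := 3*ω₃/2 * z ^ ((1:ℂ)/3)
      * (ω₃ * (((1:ℂ)/3) * (-1 + S) ^ ((1:ℂ)/3 - 1)
          * (Complex.I * (((1:ℂ)/2) * (z-1) ^ ((1:ℂ)/2 - 1) * 1)))
         + ((1:ℂ)/3) * (-1 - S) ^ ((1:ℂ)/3 - 1)
          * (-(Complex.I * (((1:ℂ)/2) * (z-1) ^ ((1:ℂ)/2 - 1) * 1)))) with hT2def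
  have hdgg : HasDerivAt PhiAux.gg ((27:ℂ)/4 * (T1 + T2)) z := by
    exact (((hdf.mul hdB).sub_const 1).const_mul ((27:ℂ)/4))
  -- deriv phi = deriv gg
  have hUopen : IsOpen {w : ℂ | w - 1 ∈ Complex.slitPlane} :=
    Complex.isOpen_slitPlane.preimage (continuous_id.sub continuous_const)
  have hev : phi =ᶠ[nhds z] PhiAux.gg :=
    Filter.eventuallyEq_of_mem (hUopen.mem_nhds hslit1) (fun w hw => PhiAux.phi_eq_gg hw)
  have hD : deriv phi z = (27:ℂ)/4 * (T1 + T2) := by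
    rw [hev.deriv_eq, hdgg.deriv]
  -- abs of atoms
  have habsz_near : |‖z‖ - 1| ≤ ε := by
    have h := abs_norm_sub_norm_le z 1
    rw [norm_one] at h
    simpa [habs1] using h
  have habszlb : (1:ℝ)/2 ≤ ‖z‖ := by
    rcases abs_le.mp habsz_near with ⟨h, _⟩; linarith
  have habszub : ‖z‖ ≤ 2 := by
    rcases abs_le.mp habsz_near with ⟨_, h⟩; linarith
  have habsU_near : |‖-1 + S‖ - 1| ≤ Real.sqrt ε := by
    have h := abs_norm_sub_norm_le (-1 + S) (-1)
    have h2 : (-1 + S) - (-1) = S := by ring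
    rw [h2] at h
    simpa [hSabs] using h
  have habsUlb : (1:ℝ)/2 ≤ ‖-1 + S‖ := by
    rcases abs_le.mp habsU_near with ⟨h, _⟩; linarith
  have habsUub : ‖-1 + S‖ ≤ 2 := by
    rcases abs_le.mp habsU_near with ⟨_, h⟩; linarith
  have habsV_near : |‖-1 - S‖ - 1| ≤ Real.sqrt ε := by
    have h := abs_norm_sub_norm_le (-1 - S) (-1)
    have h2 : (-1 - S) - (-1) = -S := by ring
    rw [h2] at h
    simpa [hSabs] using h
  have habsVlb : (1:ℝ)/2 ≤ ‖-1 - S‖ := by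
    rcases abs_le.mp habsV_near with ⟨h, _⟩; linarith
  have habsVub : ‖-1 - S‖ ≤ 2 := by
    rcases abs_le.mp habsV_near with ⟨_, h⟩; linarith
  have hcast13 : ((1:ℂ)/3) = (((1:ℝ)/3 : ℝ) : ℂ) := by norm_num
  have hcast13' : ((1:ℂ)/3 - 1) = (((1:ℝ)/3 - 1 : ℝ) : ℂ) := by push_cast; norm_num
  have hzne : z ≠ 0 := Complex.slitPlane_ne_zero hslitz
  have habs_z13 : ‖z ^ ((1:ℂ)/3)‖ ≤ 2 := by
    rw [hcast13, Complex.norm_cpow_real]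
    exact PhiAux.rpow_third_le (norm_nonneg z) habszub
  have habs_z13' : ‖z ^ ((1:ℂ)/3 - 1)‖ ≤ 2 := by
    rw [hcast13', Complex.norm_cpow_real]
    exact PhiAux.rpow_neg_twothird_le habszlb
  have habs_U13' : ‖(-1 + S) ^ ((1:ℂ)/3 - 1)‖ ≤ 2 := by
    rw [hcast13', Complex.norm_cpow_real]
    exact PhiAux.rpow_neg_twothird_le habsUlb
  have habs_V13' : ‖(-1 - S) ^ ((1:ℂ)/3 - 1)‖ ≤ 2 := by
    rw [hcast13', Complex.norm_cpow_real]
    exact PhiAux.rpow_neg_twothird_le habsVlb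
  have habsQ' : ‖(z-1) ^ ((1:ℂ)/2 - 1)‖ = ε ^ (-(1:ℝ)/2) := by
    rw [show ((1:ℂ)/2 - 1) = ((-(1:ℝ)/2 : ℝ) : ℂ) by push_cast; norm_num,
      Complex.norm_cpow_real, habs1]
  have hepos : (0:ℝ) < ε ^ (-(1:ℝ)/2) := Real.rpow_pos_of_pos hε0 _
  have he1 : (1:ℝ) ≤ ε ^ (-(1:ℝ)/2) := by
    exact Real.one_le_rpow_of_pos_of_le_one_of_nonpos hε0 (by linarith) (by norm_num)
  have habs_c32 : ‖3*ω₃/2‖ = 3/2 := by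
    rw [norm_div, norm_mul, PhiAux.abs_omega]
    norm_num
  -- lower bound pieces
  have hfU : (-1 + S) ^ ((1:ℂ)/3)
      = Complex.exp ((Real.pi:ℂ) * Complex.I / 3) * (1 - S) ^ ((1:ℂ)/3) := by
    have him : (1 - S).im < 0 := by
      have : (1 - S).im = -S.im := by simp
      rw [this]; linarith
    have h := PhiAux.neg_cpow_third_of_im_neg him
    rw [show -(1 - S) = -1 + S by ring] at h
    exact h
  have hfV : (-1 - S) ^ ((1:ℂ)/3)
      = Complex.exp (-((Real.pi:ℂ) * Complex.I) / 3) * (1 + S) ^ ((1:ℂ)/3) := by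
    have him : 0 < (1 + S).im := by
      have : (1 + S).im = S.im := by simp
      rw [this]; exact hSimpos
    have h := PhiAux.neg_cpow_third_of_im_pos him
    rw [show -(1 + S) = -1 - S by ring] at h
    exact h
  have hc1 : ‖(1 - S) ^ ((1:ℂ)/3) - 1‖ ≤ Real.sqrt ε := by
    have h := PhiAux.cbrt_one_add_sub_one (w := -S)
      (by rw [norm_neg, hSabs]; linarith)
    rw [show ((1:ℂ) + -S) = 1 - S by ring, norm_neg, hSabs] at h
    exact h
  have hc2 : ‖(1 + S) ^ ((1:ℂ)/3) - 1‖ ≤ Real.sqrt ε := by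
    have h := PhiAux.cbrt_one_add_sub_one (w := S) (by rw [hSabs]; linarith)
    rw [hSabs] at h
    exact h
  have hc3 : ‖z ^ ((1:ℂ)/3) - 1‖ ≤ ε := by
    have h := PhiAux.cbrt_one_add_sub_one (w := z - 1) (by rw [habs1]; linarith)
    rw [show ((1:ℂ) + (z - 1)) = z by ring, habs1] at h
    exact h
  have habs_U13 : ‖(-1 + S) ^ ((1:ℂ)/3)‖ ≤ 1 + Real.sqrt ε := by
    rw [hfU]
    rw [norm_mul]
    have h1 : ‖Complex.exp ((Real.pi:ℂ) * Complex.I / 3)‖ = 1 := by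
      rw [Complex.norm_exp]
      norm_num [Complex.div_re, Complex.mul_re, Complex.mul_im]
    rw [h1, one_mul]
    calc ‖(1 - S) ^ ((1:ℂ)/3)‖
        ≤ ‖(1 - S) ^ ((1:ℂ)/3) - 1‖ + ‖(1:ℂ)‖ := by
          have := norm_add_le ((1 - S) ^ ((1:ℂ)/3) - 1) 1
          simpa using this
      _ ≤ 1 + Real.sqrt ε := by rw [norm_one]; linarith
  have hBabs : ‖Bz‖ ≤ 3 := by
    rw [hBzdef, hfU, hfV]
    calc ‖ω₃ * (Complex.exp ((Real.pi:ℂ) * Complex.I / 3) * (1 - S) ^ ((1:ℂ)/3))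
          + Complex.exp (-((Real.pi:ℂ) * Complex.I) / 3) * (1 + S) ^ ((1:ℂ)/3)‖
        ≤ ‖ω₃ * (Complex.exp ((Real.pi:ℂ) * Complex.I / 3) * (1 - S) ^ ((1:ℂ)/3))‖
          + ‖Complex.exp (-((Real.pi:ℂ) * Complex.I) / 3) * (1 + S) ^ ((1:ℂ)/3)‖ :=
          norm_add_le _ _
      _ ≤ 3 := by
          rw [norm_mul, norm_mul, norm_mul, PhiAux.abs_omega, PhiAux.abs_exp_neg_pi_third]
          have h1 : ‖Complex.exp ((Real.pi:ℂ) * Complex.I / 3)‖ = 1 := by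
            rw [Complex.norm_exp]
            norm_num [Complex.div_re, Complex.mul_re, Complex.mul_im]
          rw [h1]
          have g1 : ‖(1 - S) ^ ((1:ℂ)/3)‖ ≤ 1 + Real.sqrt ε := by
            calc ‖(1 - S) ^ ((1:ℂ)/3)‖
                ≤ ‖(1 - S) ^ ((1:ℂ)/3) - 1‖ + ‖(1:ℂ)‖ := by
                  have := norm_add_le ((1 - S) ^ ((1:ℂ)/3) - 1) 1
                  simpa using this
              _ ≤ 1 + Real.sqrt ε := by rw [norm_one]; linarith
          have g2 : ‖(1 + S) ^ ((1:ℂ)/3)‖ ≤ 1 + Real.sqrt ε := by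
            calc ‖(1 + S) ^ ((1:ℂ)/3)‖
                ≤ ‖(1 + S) ^ ((1:ℂ)/3) - 1‖ + ‖(1:ℂ)‖ := by
                  have := norm_add_le ((1 + S) ^ ((1:ℂ)/3) - 1) 1
                  simpa using this
              _ ≤ 1 + Real.sqrt ε := by rw [norm_one]; linarith
          nlinarith [hsqε, hsqpos.le]
  have hBc : ‖Bz - (-1 + Complex.exp (-((Real.pi:ℂ) * Complex.I) / 3))‖
      ≤ 2 * Real.sqrt ε := by
    have hid : Bz - (-1 + Complex.exp (-((Real.pi:ℂ) * Complex.I) / 3))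
        = (-1) * ((1 - S) ^ ((1:ℂ)/3) - 1)
          + Complex.exp (-((Real.pi:ℂ) * Complex.I) / 3) * ((1 + S) ^ ((1:ℂ)/3) - 1) := by
      rw [hBzdef, hfU, hfV]
      linear_combination ((1 - S) ^ ((1:ℂ)/3)) * PhiAux.k1
    rw [hid]
    calc ‖(-1) * ((1 - S) ^ ((1:ℂ)/3) - 1)
          + Complex.exp (-((Real.pi:ℂ) * Complex.I) / 3) * ((1 + S) ^ ((1:ℂ)/3) - 1)‖
        ≤ ‖(-1) * ((1 - S) ^ ((1:ℂ)/3) - 1)‖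
          + ‖Complex.exp (-((Real.pi:ℂ) * Complex.I) / 3) * ((1 + S) ^ ((1:ℂ)/3) - 1)‖ :=
          norm_add_le _ _
      _ ≤ 2 * Real.sqrt ε := by
          rw [norm_mul, norm_mul, PhiAux.abs_exp_neg_pi_third]
          simp only [norm_neg, norm_one, one_mul]
          linarith
  have hT : ‖3*ω₃/2 * z ^ ((1:ℂ)/3) * Bz - 3/2‖ ≤ 1/4 := by
    have hid : 3*ω₃/2 * z ^ ((1:ℂ)/3) * Bz - 3/2
        = 3*ω₃/2 * ((z ^ ((1:ℂ)/3) - 1) * Bz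
            + (Bz - (-1 + Complex.exp (-((Real.pi:ℂ) * Complex.I) / 3)))) := by
      linear_combination PhiAux.k2
    rw [hid, norm_mul, habs_c32]
    have h1 : ‖(z ^ ((1:ℂ)/3) - 1) * Bz
        + (Bz - (-1 + Complex.exp (-((Real.pi:ℂ) * Complex.I) / 3)))‖
        ≤ ε * 3 + 2 * Real.sqrt ε := by
      calc ‖(z ^ ((1:ℂ)/3) - 1) * Bz
            + (Bz - (-1 + Complex.exp (-((Real.pi:ℂ) * Complex.I) / 3)))‖
          ≤ ‖(z ^ ((1:ℂ)/3) - 1) * Bz‖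
            + ‖Bz - (-1 + Complex.exp (-((Real.pi:ℂ) * Complex.I) / 3))‖ :=
            norm_add_le _ _
        _ ≤ ε * 3 + 2 * Real.sqrt ε := by
            rw [norm_mul]
            have := mul_le_mul hc3 hBabs (norm_nonneg _) hε0.le
            linarith
    nlinarith [hsqε, hε1, hε0]
  have hphiz : phi z = (27:ℂ)/4 * (3*ω₃/2 * z ^ ((1:ℂ)/3) * Bz - 1) := by
    rw [PhiAux.phi_eq_gg hslit1]
    simp only [PhiAux.gg, hBzdef, hSdef]
  have hphilb : (1:ℝ) ≤ ‖phi z‖ := by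
    have h14 : (1:ℝ)/4 ≤ ‖3*ω₃/2 * z ^ ((1:ℂ)/3) * Bz - 1‖ := by
      have h := norm_add_le (3*ω₃/2 * z ^ ((1:ℂ)/3) * Bz - 1)
        (-(3*ω₃/2 * z ^ ((1:ℂ)/3) * Bz - 3/2))
      rw [show (3*ω₃/2 * z ^ ((1:ℂ)/3) * Bz - 1)
          + (-(3*ω₃/2 * z ^ ((1:ℂ)/3) * Bz - 3/2)) = (1:ℂ)/2 by ring] at h
      rw [norm_neg] at h
      have h2 : ‖(1:ℂ)/2‖ = 1/2 := by
        rw [norm_div, norm_one]; norm_num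
      rw [h2] at h
      linarith
    rw [hphiz, norm_mul]
    have h3 : ‖(27:ℂ)/4‖ = 27/4 := by
      rw [norm_div]; norm_num
    rw [h3]
    nlinarith
  -- upper bound for the derivative
  have habsT1 : ‖T1‖ ≤ 3 := by
    rw [hT1def, norm_mul, norm_mul, habs_c32, norm_mul]
    have h13 : ‖(1:ℂ)/3‖ = 1/3 := by rw [norm_div, norm_one]; norm_num
    rw [h13]
    nlinarith [habs_z13', hBabs, norm_nonneg (z ^ ((1:ℂ)/3 - 1)), norm_nonneg Bz]
  have habsS' : ‖Complex.I * (((1:ℂ)/2) * (z-1) ^ ((1:ℂ)/2 - 1) * 1)‖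
      = 1/2 * ε ^ (-(1:ℝ)/2) := by
    rw [norm_mul, norm_mul, norm_mul, Complex.norm_I, one_mul, norm_one, mul_one, habsQ']
    have h12 : ‖(1:ℂ)/2‖ = 1/2 := by rw [norm_div, norm_one]; norm_num
    rw [h12]
  have habsT2 : ‖T2‖ ≤ 2 * ε ^ (-(1:ℝ)/2) := by
    rw [hT2def, norm_mul, norm_mul, habs_c32]
    have h13 : ‖(1:ℂ)/3‖ = 1/3 := by rw [norm_div, norm_one]; norm_num
    have hinner : ‖ω₃ * (((1:ℂ)/3) * (-1 + S) ^ ((1:ℂ)/3 - 1)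
          * (Complex.I * (((1:ℂ)/2) * (z-1) ^ ((1:ℂ)/2 - 1) * 1)))
         + ((1:ℂ)/3) * (-1 - S) ^ ((1:ℂ)/3 - 1)
          * (-(Complex.I * (((1:ℂ)/2) * (z-1) ^ ((1:ℂ)/2 - 1) * 1)))‖
        ≤ 2/3 * ε ^ (-(1:ℝ)/2) := by
      have i1 : ‖ω₃ * (((1:ℂ)/3) * (-1 + S) ^ ((1:ℂ)/3 - 1)
            * (Complex.I * (((1:ℂ)/2) * (z-1) ^ ((1:ℂ)/2 - 1) * 1)))‖
          ≤ 1/3 * ε ^ (-(1:ℝ)/2) := by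
        rw [norm_mul, PhiAux.abs_omega, one_mul, norm_mul, norm_mul, h13, habsS']
        nlinarith [habs_U13', hepos]
      have i2 : ‖((1:ℂ)/3) * (-1 - S) ^ ((1:ℂ)/3 - 1)
            * (-(Complex.I * (((1:ℂ)/2) * (z-1) ^ ((1:ℂ)/2 - 1) * 1)))‖
          ≤ 1/3 * ε ^ (-(1:ℝ)/2) := by
        rw [norm_mul, norm_mul, h13, norm_neg, habsS']
        nlinarith [habs_V13', hepos]
      calc ‖_‖ ≤ ‖ω₃ * (((1:ℂ)/3) * (-1 + S) ^ ((1:ℂ)/3 - 1)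
            * (Complex.I * (((1:ℂ)/2) * (z-1) ^ ((1:ℂ)/2 - 1) * 1)))‖
          + ‖((1:ℂ)/3) * (-1 - S) ^ ((1:ℂ)/3 - 1)
            * (-(Complex.I * (((1:ℂ)/2) * (z-1) ^ ((1:ℂ)/2 - 1) * 1)))‖ :=
            norm_add_le _ _
        _ ≤ 2/3 * ε ^ (-(1:ℝ)/2) := by linarith
    rw [mul_assoc]
    have hmm := mul_le_mul habs_z13 hinner (norm_nonneg _) (by norm_num : (0:ℝ) ≤ 2)
    linarith
  have hDabs : ‖(27:ℂ)/4 * (T1 + T2)‖ ≤ 50 * ε ^ (-(1:ℝ)/2) := by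
    rw [norm_mul]
    have h3 : ‖(27:ℂ)/4‖ = 27/4 := by rw [norm_div]; norm_num
    rw [h3]
    have h4 : ‖T1 + T2‖ ≤ ‖T1‖ + ‖T2‖ :=
      norm_add_le _ _
    nlinarith [he1, hepos]
  rw [norm_div, hD]
  calc ‖(27:ℂ)/4 * (T1 + T2)‖ / ‖phi z‖
      ≤ ‖(27:ℂ)/4 * (T1 + T2)‖ := div_le_self (norm_nonneg _) hphilb
    _ ≤ 50 * ε ^ (-(1:ℝ)/2) := hDabs
end

section
/- The function w(x) = (√3/(4π))·((1+√(1−x))^{1/3} + (1−√(1−x))^{1/3})/(x^{2/3}·√(1−x)) on (0,1) (with real roots of positive reals) is the density of a probability measure: w(x) > 0 for all x ∈ (0,1) and ∫_0^1 w(x) dx = 1. -/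
open Filter Topology Polynomial

section Aux

open MeasureTheory Real Set

/-- Auxiliary function. -/
noncomputable def G (t : ℝ) : ℝ := (1+t) ^ (-(1:ℝ)/3) * (1-t) ^ (-(2:ℝ)/3)

lemma betaC : Complex.betaIntegral (2/3) (1/3) = ((2*Real.pi/Real.sqrt 3 : ℝ) : ℂ) := by
  have h := Complex.Gamma_mul_Gamma_eq_betaIntegral (s := 2/3) (t := 1/3) (by norm_num) (by norm_num)
  rw [show (2/3 + 1/3 : ℂ) = 1 by norm_num, Complex.Gamma_one, one_mul] at h
  rw [← h]
  rw [show (2/3 : ℂ) = ((2/3 : ℝ) : ℂ) by norm_num, show (1/3 : ℂ) = ((1/3 : ℝ) : ℂ) by norm_num,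
    Complex.Gamma_ofReal, Complex.Gamma_ofReal, ← Complex.ofReal_mul]
  congr 1
  have h1 : (1 : ℝ) - 2/3 = 1/3 := by norm_num
  have := Real.Gamma_mul_Gamma_one_sub (2/3)
  rw [h1] at this
  rw [this]
  have hs : Real.sin (π * (2/3)) = Real.sqrt 3 / 2 := by
    rw [show π * (2/3) = π - π/3 by ring, Real.sin_pi_sub, Real.sin_pi_div_three]
  rw [hs]
  rw [div_div_eq_mul_div, div_eq_div_iff (by positivity) (by positivity)]
  ring

lemma eqC : ∀ x ∈ Set.uIcc (0:ℝ) 1,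
    (x:ℂ) ^ ((2:ℂ)/3 - 1) * ((1:ℂ) - x) ^ ((1:ℂ)/3 - 1)
      = ((x ^ (-(1:ℝ)/3) * (1-x) ^ (-(2:ℝ)/3) : ℝ) : ℂ) := by
  intro x hx
  rw [Set.uIcc_of_le (by norm_num)] at hx
  obtain ⟨h0, h1⟩ := hx
  rw [Complex.ofReal_mul, Complex.ofReal_cpow h0, Complex.ofReal_cpow (by linarith)]
  push_cast
  norm_num

lemma fVal : ∫ u in Set.Ioo (0:ℝ) 1, u ^ (-(1:ℝ)/3) * (1-u) ^ (-(2:ℝ)/3)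
    = 2*Real.pi/Real.sqrt 3 := by
  have h : Complex.betaIntegral (2/3) (1/3)
      = ∫ x in (0:ℝ)..1, ((x ^ (-(1:ℝ)/3) * (1-x) ^ (-(2:ℝ)/3) : ℝ) : ℂ) := by
    rw [Complex.betaIntegral]
    exact intervalIntegral.integral_congr eqC
  rw [betaC, intervalIntegral.integral_ofReal] at h
  have h2 := Complex.ofReal_injective h
  rw [intervalIntegral.integral_of_le (by norm_num), integral_Ioc_eq_integral_Ioo] at h2
  exact h2.symm

lemma fInt : IntegrableOn (fun u : ℝ => u ^ (-(1:ℝ)/3) * (1-u) ^ (-(2:ℝ)/3)) (Set.Ioo 0 1) := by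
  have h := (Complex.betaIntegral_convergent (u := 2/3) (v := 1/3) (by norm_num) (by norm_num))
  rw [intervalIntegrable_iff_integrableOn_Ioo_of_le (by norm_num)] at h
  have h2 : IntegrableOn (fun x : ℝ => ((x ^ (-(1:ℝ)/3) * (1-x) ^ (-(2:ℝ)/3) : ℝ) : ℂ))
      (Set.Ioo 0 1) := by
    refine h.congr_fun (fun x hx => ?_) measurableSet_Ioo
    exact (eqC x (Set.mem_uIcc.mpr (Or.inl ⟨hx.1.le, hx.2.le⟩)))
  have := h2.re
  simpa [IntegrableOn] using this

lemma Gpt {u : ℝ} (h0 : 0 < u) (h1 : u < 1) :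
    (2:ℝ) * G (2*u - 1) = u ^ (-(1:ℝ)/3) * (1-u) ^ (-(2:ℝ)/3) := by
  have e1 : 1 + (2*u - 1) = 2 * u := by ring
  have e2 : 1 - (2*u - 1) = 2 * (1 - u) := by ring
  rw [G, e1, e2, Real.mul_rpow (by norm_num) h0.le, Real.mul_rpow (by norm_num) (by linarith)]
  have : (2:ℝ) ^ (-(1:ℝ)/3) * (2:ℝ) ^ (-(2:ℝ)/3) = 1/2 := by
    rw [← Real.rpow_add (by norm_num), show (-(1:ℝ)/3 + -(2:ℝ)/3) = ((-1 : ℤ) : ℝ) by norm_num,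
      Real.rpow_intCast]
    norm_num
  calc (2:ℝ) * (2 ^ (-(1:ℝ)/3) * u ^ (-(1:ℝ)/3) * (2 ^ (-(2:ℝ)/3) * (1-u) ^ (-(2:ℝ)/3)))
      = 2 * (2 ^ (-(1:ℝ)/3) * 2 ^ (-(2:ℝ)/3)) * (u ^ (-(1:ℝ)/3) * (1-u) ^ (-(2:ℝ)/3)) := by ring
    _ = u ^ (-(1:ℝ)/3) * (1-u) ^ (-(2:ℝ)/3) := by rw [this]; ring

lemma img1 : (fun u : ℝ => 2*u - 1) '' Set.Ioo (1/2) 1 = Set.Ioo (0:ℝ) 1 := by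
  ext y
  simp only [Set.mem_image, Set.mem_Ioo]
  constructor
  · rintro ⟨u, ⟨h1, h2⟩, rfl⟩; constructor <;> linarith
  · rintro ⟨h1, h2⟩; exact ⟨(y+1)/2, ⟨by linarith, by linarith⟩, by ring⟩

lemma img2 : (fun u : ℝ => 1 - 2*u) '' Set.Ioo 0 (1/2) = Set.Ioo (0:ℝ) 1 := by
  ext y
  simp only [Set.mem_image, Set.mem_Ioo]
  constructor
  · rintro ⟨u, ⟨h1, h2⟩, rfl⟩; constructor <;> linarith
  · rintro ⟨h1, h2⟩; exact ⟨(1-y)/2, ⟨by linarith, by linarith⟩, by ring⟩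

lemma hderiv1 : ∀ u ∈ Set.Ioo (1/2:ℝ) 1,
    HasDerivWithinAt (fun u : ℝ => 2*u - 1) (2:ℝ) (Set.Ioo (1/2) 1) u := by
  intro u _
  simpa using (((hasDerivAt_id u).const_mul 2).sub_const 1).hasDerivWithinAt

lemma hderiv2 : ∀ u ∈ Set.Ioo (0:ℝ) (1/2),
    HasDerivWithinAt (fun u : ℝ => 1 - 2*u) (-2:ℝ) (Set.Ioo 0 (1/2)) u := by
  intro u _
  simpa using (((hasDerivAt_id u).const_mul 2).const_sub 1).hasDerivWithinAt

lemma sub1 : ∫ t in Set.Ioo (0:ℝ) 1, G t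
    = ∫ u in Set.Ioo (1/2:ℝ) 1, u ^ (-(1:ℝ)/3) * (1-u) ^ (-(2:ℝ)/3) := by
  rw [← img1, integral_image_eq_integral_abs_deriv_smul measurableSet_Ioo hderiv1
    (fun a _ b _ h => by linarith) G]
  refine setIntegral_congr_fun measurableSet_Ioo (fun u hu => ?_)
  have h0 : (0:ℝ) < u := by linarith [hu.1]
  rw [smul_eq_mul, abs_of_pos (by norm_num : (0:ℝ) < 2), Gpt h0 hu.2]

lemma sub2 : ∫ t in Set.Ioo (0:ℝ) 1, G (-t)
    = ∫ u in Set.Ioo (0:ℝ) (1/2), u ^ (-(1:ℝ)/3) * (1-u) ^ (-(2:ℝ)/3) := by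
  rw [← img2, integral_image_eq_integral_abs_deriv_smul measurableSet_Ioo hderiv2
    (fun a _ b _ h => by linarith) (fun t => G (-t))]
  refine setIntegral_congr_fun measurableSet_Ioo (fun u hu => ?_)
  have h1 : u < 1 := by linarith [hu.2]
  rw [smul_eq_mul, show |(-2:ℝ)| = 2 by norm_num, show -(1 - 2*u) = 2*u - 1 by ring]
  exact Gpt hu.1 h1

lemma Gint1 : IntegrableOn G (Set.Ioo (0:ℝ) 1) := by
  rw [← img1, integrableOn_image_iff_integrableOn_abs_deriv_smul measurableSet_Ioo hderiv1
    (fun a _ b _ h => by linarith)]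
  refine (fInt.mono_set (Set.Ioo_subset_Ioo (by norm_num) le_rfl)).congr_fun
    (fun u hu => ?_) measurableSet_Ioo
  have h0 : (0:ℝ) < u := by linarith [hu.1]
  rw [smul_eq_mul, abs_of_pos (by norm_num : (0:ℝ) < 2), Gpt h0 hu.2]

lemma Gint2 : IntegrableOn (fun t => G (-t)) (Set.Ioo (0:ℝ) 1) := by
  rw [← img2, integrableOn_image_iff_integrableOn_abs_deriv_smul measurableSet_Ioo hderiv2
    (fun a _ b _ h => by linarith)]
  refine (fInt.mono_set (Set.Ioo_subset_Ioo le_rfl (by norm_num))).congr_fun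
    (fun u hu => ?_) measurableSet_Ioo
  have h1 : u < 1 := by linarith [hu.2]
  rw [smul_eq_mul, show |(-2:ℝ)| = 2 by norm_num, show -(1 - 2*u) = 2*u - 1 by ring]
  exact (Gpt hu.1 h1).symm

lemma img3 : (fun t : ℝ => 1 - t^2) '' Set.Ioo 0 1 = Set.Ioo (0:ℝ) 1 := by
  ext y
  simp only [Set.mem_image, Set.mem_Ioo]
  constructor
  · rintro ⟨t, ⟨h1, h2⟩, rfl⟩
    constructor <;> nlinarith
  · rintro ⟨h1, h2⟩
    refine ⟨Real.sqrt (1-y), ⟨Real.sqrt_pos.mpr (by linarith), ?_⟩, ?_⟩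
    · nlinarith [Real.sq_sqrt (show (0:ℝ) ≤ 1 - y by linarith), Real.sqrt_nonneg (1-y)]
    · rw [Real.sq_sqrt (by linarith)]; ring

lemma hderiv3 : ∀ t ∈ Set.Ioo (0:ℝ) 1,
    HasDerivWithinAt (fun t : ℝ => 1 - t^2) (-(2*t)) (Set.Ioo (0:ℝ) 1) t := by
  intro t _
  simpa using ((hasDerivAt_pow 2 t).const_sub 1).hasDerivWithinAt

lemma inj3 : Set.InjOn (fun t : ℝ => 1 - t^2) (Set.Ioo 0 1) := by
  rintro a ⟨ha, _⟩ b ⟨hb, _⟩ h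
  simp only [] at h
  nlinarith

lemma wpt {t : ℝ} (h0 : 0 < t) (h1 : t < 1) :
    |(-(2*t))| * w (1 - t^2) = (Real.sqrt 3 / (2 * Real.pi)) * (G t + G (-t)) := by
  have ha : (0:ℝ) < 1 + t := by linarith
  have hb : (0:ℝ) < 1 - t := by linarith
  have hs : Real.sqrt (1 - (1 - t^2)) = t := by
    rw [show 1 - (1 - t^2) = t^2 by ring, Real.sqrt_sq h0.le]
  have hmul : ((1:ℝ) - t^2) ^ ((2:ℝ)/3) = (1-t) ^ ((2:ℝ)/3) * (1+t) ^ ((2:ℝ)/3) := by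
    rw [show (1:ℝ) - t^2 = (1-t)*(1+t) by ring, Real.mul_rpow hb.le ha.le]
  have hp1 : (0:ℝ) < (1+t) ^ ((2:ℝ)/3) := Real.rpow_pos_of_pos ha _
  have hp2 : (0:ℝ) < (1-t) ^ ((2:ℝ)/3) := Real.rpow_pos_of_pos hb _
  have d1 : G t = (1+t) ^ ((1:ℝ)/3) / ((1-t) ^ ((2:ℝ)/3) * (1+t) ^ ((2:ℝ)/3)) := by
    rw [G, show -(1:ℝ)/3 = (1:ℝ)/3 - (2:ℝ)/3 by norm_num, Real.rpow_sub ha,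
      show -(2:ℝ)/3 = -((2:ℝ)/3) by ring, Real.rpow_neg hb.le]
    field_simp
    try left
    try ring
  have d2 : G (-t) = (1-t) ^ ((1:ℝ)/3) / ((1-t) ^ ((2:ℝ)/3) * (1+t) ^ ((2:ℝ)/3)) := by
    rw [G, show (1:ℝ) + -t = 1 - t by ring, show (1:ℝ) - -t = 1 + t by ring,
      show -(1:ℝ)/3 = (1:ℝ)/3 - (2:ℝ)/3 by norm_num, Real.rpow_sub hb,
      show -(2:ℝ)/3 = -((2:ℝ)/3) by ring, Real.rpow_neg ha.le]
    field_simp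
    try left
    try ring
  rw [abs_of_neg (by nlinarith), w, hs, hmul, d1, d2]
  have hπ : Real.pi ≠ 0 := Real.pi_ne_zero
  field_simp
  ring

lemma wInt : ∫ x in Set.Ioo (0:ℝ) 1, w x = 1 := by
  have hsub : ∫ x in Set.Ioo (0:ℝ) 1, w x
      = ∫ t in Set.Ioo (0:ℝ) 1, |(-(2*t))| • w (1 - t^2) := by
    have h := integral_image_eq_integral_abs_deriv_smul measurableSet_Ioo hderiv3 inj3 w
    rw [img3] at h
    exact h
  have hcong : ∫ t in Set.Ioo (0:ℝ) 1, |(-(2*t))| • w (1 - t^2)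
      = ∫ t in Set.Ioo (0:ℝ) 1, (Real.sqrt 3 / (2 * Real.pi)) * (G t + G (-t)) :=
    setIntegral_congr_fun measurableSet_Ioo (fun t ht => by
      rw [smul_eq_mul, wpt ht.1 ht.2])
  have hsplit : ∫ u in Set.Ioo (0:ℝ) 1, u ^ (-(1:ℝ)/3) * (1-u) ^ (-(2:ℝ)/3)
      = (∫ u in Set.Ioo (0:ℝ) (1/2), u ^ (-(1:ℝ)/3) * (1-u) ^ (-(2:ℝ)/3))
        + ∫ u in Set.Ioo (1/2:ℝ) 1, u ^ (-(1:ℝ)/3) * (1-u) ^ (-(2:ℝ)/3) := by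
    rw [← Set.Ioo_union_Ico_eq_Ioo (show (0:ℝ) < 1/2 by norm_num)
      (show (1/2:ℝ) ≤ 1 by norm_num)]
    rw [setIntegral_union (Set.disjoint_left.mpr
        (fun x hx hx2 => absurd hx.2 (not_lt.mpr hx2.1))) measurableSet_Ico
      (fInt.mono_set (Set.Ioo_subset_Ioo le_rfl (by norm_num)))
      (fInt.mono_set (fun x hx => ⟨by linarith [hx.1], hx.2⟩))]
    rw [integral_Ico_eq_integral_Ioo]
  rw [hsub, hcong, integral_const_mul, integral_add Gint1 Gint2, sub1, sub2,
    add_comm (∫ u in Set.Ioo (1/2:ℝ) 1, u ^ (-(1:ℝ)/3) * (1-u) ^ (-(2:ℝ)/3))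
      (∫ u in Set.Ioo (0:ℝ) (1/2), u ^ (-(1:ℝ)/3) * (1-u) ^ (-(2:ℝ)/3)),
    ← hsplit, fVal]
  have h3 : Real.sqrt 3 ≠ 0 := by positivity
  field_simp

end Aux

/-- `w` is the density of a probability measure on `(0,1)`:
it is positive there and integrates to `1`. -/
theorem w_probability_density :
    (∀ x ∈ Set.Ioo (0 : ℝ) 1, 0 < w x) ∧ (∫ x in (0 : ℝ)..1, w x) = 1 := by
  constructor
  · rintro x ⟨hx0, hx1⟩
    have h1x : (0:ℝ) < 1 - x := by linarith
    have hs0 : 0 < Real.sqrt (1 - x) := Real.sqrt_pos.mpr h1x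
    have hs1 : Real.sqrt (1 - x) < 1 := by
      nlinarith [Real.sq_sqrt h1x.le, Real.sqrt_nonneg (1-x)]
    have hnum : 0 < (1 + Real.sqrt (1 - x)) ^ ((1 : ℝ) / 3)
        + (1 - Real.sqrt (1 - x)) ^ ((1 : ℝ) / 3) :=
      add_pos (Real.rpow_pos_of_pos (by linarith) _) (Real.rpow_pos_of_pos (by linarith) _)
    have hden : 0 < x ^ ((2 : ℝ) / 3) * Real.sqrt (1 - x) :=
      mul_pos (Real.rpow_pos_of_pos hx0 _) hs0
    exact mul_pos (div_pos (Real.sqrt_pos.mpr (by norm_num)) (by positivity))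
      (div_pos hnum hden)
  · rw [intervalIntegral.integral_of_le (by norm_num : (0:ℝ) ≤ 1),
      MeasureTheory.integral_Ioc_eq_integral_Ioo, wInt]
end
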